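/- arXiv:0706.1062 — 2 statements merged into one kernel-verified Lean document; each statement's English description precedes it below -/
import Mathlib

section
/- If X_1, ..., X_n are i.i.d. continuous power-law random variables with parameter α > 1 and lower bound x_min, and α̂ = 1 + n/(Σ ln(X_i/x_min)), then (α̂ − 1)^{-1} · (α−1) · n, equivalently Σ ln(X_i/x_min), is distributed as a Gamma random variable with shape n and rate α − 1; consequently for n ≥ 2, E[α̂] = 1 + n(α−1)/(n−1) = (nα − 1)/(n − 1). -/
open MeasureTheory Set ProbabilityTheory Real Filter

namespace PLAux


/-- Gamma pdf with natural shape, using natural powers. -/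
noncomputable def gpdf (k : ℕ) (r x : ℝ) : ℝ :=
  r ^ k * x ^ (k - 1) * Real.exp (-(r * x)) / (Nat.factorial (k - 1))

/-- Gamma cdf with natural shape. -/
noncomputable def gcdf (k : ℕ) (r t : ℝ) : ℝ :=
  1 - Real.exp (-(r * t)) * ∑ j ∈ Finset.range k, (r * t) ^ j / (Nat.factorial j)

lemma gpdf_nonneg {k : ℕ} {r : ℝ} (hr : 0 < r) {x : ℝ} (hx : 0 ≤ x) :
    0 ≤ gpdf k r x := by
  unfold gpdf; positivity

lemma continuous_gpdf (k : ℕ) (r : ℝ) : Continuous (gpdf k r) := by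
  unfold gpdf; fun_prop

lemma gammaPDFReal_eq_gpdf {k : ℕ} (hk : 1 ≤ k) {r x : ℝ} (hx : 0 ≤ x) :
    gammaPDFReal k r x = gpdf k r x := by
  obtain ⟨m, rfl⟩ : ∃ m, k = m + 1 := ⟨k - 1, (Nat.succ_pred_eq_of_pos hk).symm⟩
  rw [gammaPDFReal, if_pos hx, gpdf]
  have h1 : ((m + 1 : ℕ) : ℝ) - 1 = (m : ℝ) := by push_cast; ring
  have h2 : Gamma ((m + 1 : ℕ) : ℝ) = (Nat.factorial m : ℝ) := by
    push_cast; exact Real.Gamma_nat_eq_factorial m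
  rw [h1, h2, Real.rpow_natCast, Real.rpow_natCast]
  simp only [Nat.add_sub_cancel]
  field_simp

lemma gcdf_zero {k : ℕ} (hk : 1 ≤ k) (r : ℝ) : gcdf k r 0 = 0 := by
  obtain ⟨m, rfl⟩ : ∃ m, k = m + 1 := ⟨k - 1, (Nat.succ_pred_eq_of_pos hk).symm⟩
  rw [gcdf, Finset.sum_range_succ']
  simp

lemma hasDerivAt_gcdf {k : ℕ} (hk : 1 ≤ k) {r : ℝ} (t : ℝ) :
    HasDerivAt (gcdf k r) (gpdf k r t) t := by
  obtain ⟨m, rfl⟩ : ∃ m, k = m + 1 := ⟨k - 1, (Nat.succ_pred_eq_of_pos hk).symm⟩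
  clear hk
  induction m with
  | zero =>
      have h : (gcdf 1 r) = fun t => 1 - Real.exp (-(r * t)) := by
        funext t; rw [gcdf]; simp
      rw [h]
      have hd : HasDerivAt (fun t : ℝ => -(r * t)) (-r) t := by
        exact ((hasDerivAt_id t).const_mul r).neg.congr_deriv (by simp)
      have := (hd.exp).const_sub 1
      refine this.congr_deriv ?_
      rw [gpdf]; simp; ring
  | succ m ih =>
      have hsplit : (gcdf (m + 2) r) = fun t => gcdf (m + 1) r t -
          Real.exp (-(r * t)) * ((r * t) ^ (m + 1) / (Nat.factorial (m + 1))) := by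
        funext t
        rw [gcdf, gcdf, Finset.sum_range_succ]
        ring
      rw [hsplit]
      have hd1 : HasDerivAt (fun t : ℝ => -(r * t)) (-r) t := by
        exact ((hasDerivAt_id t).const_mul r).neg.congr_deriv (by simp)
      have hd2 : HasDerivAt (fun t : ℝ => (r * t) ^ (m + 1) / (Nat.factorial (m + 1)))
          (((m + 1 : ℕ) : ℝ) * (r * t) ^ m * r / (Nat.factorial (m + 1))) t := by
        have := (((hasDerivAt_id t).const_mul r).pow (m + 1)).div_const
          ((Nat.factorial (m + 1) : ℝ))
        simpa using this
      have hd3 := (hd1.exp.mul hd2)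
      have := ih.sub hd3
      refine this.congr_deriv ?_
      rw [gpdf, gpdf]
      simp only [Nat.add_sub_cancel]
      have hf1 : ((Nat.factorial (m + 1)) : ℝ) = ((m : ℝ) + 1) * (Nat.factorial m) := by
        rw [Nat.factorial_succ]; push_cast; ring
      rw [hf1]; push_cast
      field_simp
      ring

lemma integral_gpdf {k : ℕ} (hk : 1 ≤ k) (r t : ℝ) :
    ∫ x in (0:ℝ)..t, gpdf k r x = gcdf k r t := by
  rw [intervalIntegral.integral_eq_sub_of_hasDerivAt
    (fun x _ => hasDerivAt_gcdf hk x)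
    ((continuous_gpdf k r).intervalIntegrable 0 t), gcdf_zero hk, sub_zero]


lemma continuous_gcdf (k : ℕ) (r : ℝ) : Continuous (gcdf k r) := by
  unfold gcdf; fun_prop
lemma gammaMeasure_Iic {k : ℕ} (hk : 1 ≤ k) {r : ℝ} (hr : 0 < r) (t : ℝ) :
    gammaMeasure k r (Iic t) = ENNReal.ofReal (if 0 ≤ t then gcdf k r t else 0) := by
  rw [gammaMeasure, withDensity_apply _ measurableSet_Iic]
  by_cases ht : 0 ≤ t
  · rw [if_pos ht]
    rw [lintegral_Iic_eq_lintegral_Iio_add_Icc _ ht, lintegral_gammaPDF_of_nonpos le_rfl,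
      zero_add]
    have hcong : ∫⁻ x in Icc 0 t, gammaPDF k r x
        = ∫⁻ x in Icc 0 t, ENNReal.ofReal (gpdf k r x) := by
      refine setLIntegral_congr_fun measurableSet_Icc (fun x hx => ?_)
      rw [gammaPDF, gammaPDFReal_eq_gpdf hk hx.1]
    rw [hcong, ← ofReal_integral_eq_lintegral_ofReal
      (((continuous_gpdf k r).integrableOn_Icc))
      ((ae_restrict_iff' measurableSet_Icc).2 (ae_of_all _ fun x hx => gpdf_nonneg hr hx.1))]
    congr 1
    rw [MeasureTheory.integral_Icc_eq_integral_Ioc,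
      ← intervalIntegral.integral_of_le ht, integral_gpdf hk]
  · rw [if_neg ht]
    push_neg at ht
    rw [setLIntegral_congr_fun measurableSet_Iic
      (fun x (hx : x ≤ t) => gammaPDF_of_neg (lt_of_le_of_lt hx ht))]
    simp

-- the key real-integral convolution identity
lemma conv_integral {k : ℕ} (hk : 1 ≤ k) {r : ℝ} (hr : 0 < r) {t : ℝ} (ht : 0 ≤ t) :
    ∫ y in (0:ℝ)..t, gpdf k r y * (1 - Real.exp (-(r * (t - y)))) = gcdf (k + 1) r t := by
  have hfun : ∀ y : ℝ, gpdf k r y * (1 - Real.exp (-(r * (t - y))))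
      = gpdf k r y - (Real.exp (-(r * t)) * r ^ k / (Nat.factorial (k - 1))) * y ^ (k - 1) := by
    intro y
    rw [gpdf]
    rw [show -(r * t) = -(r * y) + -(r * (t - y)) by ring, Real.exp_add]
    ring
  simp_rw [hfun]
  rw [intervalIntegral.integral_sub ((continuous_gpdf k r).intervalIntegrable 0 t)
    ((show Continuous fun y : ℝ => Real.exp (-(r * t)) * r ^ k / (Nat.factorial (k - 1)) * y ^ (k - 1) from continuous_const.mul (continuous_pow _)).intervalIntegrable 0 t),
    integral_gpdf hk, intervalIntegral.integral_const_mul, integral_pow]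
  have hks : k - 1 + 1 = k := Nat.succ_pred_eq_of_pos hk
  have hfact : ((Nat.factorial k) : ℝ) = (k : ℝ) * (Nat.factorial (k - 1)) := by
    rw [← Nat.mul_factorial_pred (by omega)]; push_cast; ring
  rw [hks, gcdf, gcdf, Finset.sum_range_succ]
  have hk0 : (k : ℝ) ≠ 0 := Nat.cast_ne_zero.2 (by omega)
  have hf0 : ((Nat.factorial (k - 1)) : ℝ) ≠ 0 := Nat.cast_ne_zero.2 (Nat.factorial_ne_zero _)
  rw [zero_pow (by omega), show ((k - 1 : ℕ) : ℝ) + 1 = k by rw [Nat.cast_sub hk]; push_cast; ring]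
  rw [hfact]
  field_simp
  ring

-- conv measure lemma
lemma map_add_gamma {Ω : Type*} [MeasurableSpace Ω] {Pr : Measure Ω} [IsProbabilityMeasure Pr]
    {Y Z : Ω → ℝ} (hY : Measurable Y) (hZ : Measurable Z) (hind : IndepFun Y Z Pr)
    {k : ℕ} (hk : 1 ≤ k) {r : ℝ} (hr : 0 < r)
    (hlY : Measure.map Y Pr = gammaMeasure k r) (hlZ : Measure.map Z Pr = gammaMeasure 1 r) :
    Measure.map (fun ω => Y ω + Z ω) Pr = gammaMeasure (k + 1) r := by
  have hprod : Measure.map (fun ω => (Y ω, Z ω)) Pr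
      = (gammaMeasure k r).prod (gammaMeasure 1 r) := by
    rw [← hlY, ← hlZ]
    exact (indepFun_iff_map_prod_eq_prod_map_map hY.aemeasurable hZ.aemeasurable).mp hind
  have hmap : Measure.map (fun ω => Y ω + Z ω) Pr
      = Measure.map (fun p : ℝ × ℝ => p.1 + p.2) ((gammaMeasure k r).prod (gammaMeasure 1 r)) := by
    rw [← hprod, Measure.map_map measurable_add (hY.prodMk hZ)]
    rfl
  have hki : (0:ℝ) < (k:ℝ) := by exact_mod_cast hk
  haveI : IsProbabilityMeasure (gammaMeasure k r) := isProbabilityMeasure_gammaMeasure hki hr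
  haveI : IsProbabilityMeasure (gammaMeasure (1:ℝ) r) := isProbabilityMeasure_gammaMeasure one_pos hr
  haveI : IsProbabilityMeasure (gammaMeasure ((k:ℝ) + 1) r) :=
    isProbabilityMeasure_gammaMeasure (by positivity) hr
  rw [hmap]
  haveI : IsProbabilityMeasure (Measure.map (fun p : ℝ × ℝ => p.1 + p.2)
      ((gammaMeasure k r).prod (gammaMeasure 1 r))) :=
    Measure.isProbabilityMeasure_map measurable_add.aemeasurable
  have hcast : ((k:ℝ) + 1) = (((k+1:ℕ)):ℝ) := by push_cast; ring
  refine Measure.ext_of_Iic _ _ (fun t => ?_)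
  rw [Measure.map_apply measurable_add measurableSet_Iic,
    show (fun p : ℝ × ℝ => p.1 + p.2) ⁻¹' (Iic t) = {p : ℝ × ℝ | p.1 + p.2 ≤ t} from rfl,
    Measure.prod_apply (by exact measurable_add measurableSet_Iic)]
  have hset : ∀ y : ℝ, (Prod.mk y ⁻¹' {p : ℝ × ℝ | p.1 + p.2 ≤ t}) = Iic (t - y) := by
    intro y; ext z; simp [le_sub_iff_add_le']
  have hIic1 : ∀ s : ℝ, gammaMeasure (1:ℝ) r (Iic s)
      = ENNReal.ofReal (if 0 ≤ s then gcdf 1 r s else 0) := by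
    intro s
    have := gammaMeasure_Iic (k := 1) le_rfl hr s
    simpa using this
  simp_rw [hset, hIic1]
  have hmg : Measurable (gammaPDF (k:ℝ) r) := (measurable_gammaPDFReal _ _).ennreal_ofReal
  have hmint : Measurable (fun x : ℝ => ENNReal.ofReal (if 0 ≤ t - x then gcdf 1 r (t - x) else 0)) := by
    refine Measurable.ennreal_ofReal (Measurable.ite ?_ ?_ measurable_const)
    · exact measurableSet_le measurable_const (measurable_const.sub measurable_id)
    · exact ((continuous_gcdf 1 r).comp (continuous_const.sub continuous_id)).measurable
  rw [gammaMeasure, lintegral_withDensity_eq_lintegral_mul _ hmg hmint]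
  simp only [Pi.mul_apply]
  have hpoint : (fun y => gammaPDF k r y *
      ENNReal.ofReal (if 0 ≤ t - y then gcdf 1 r (t - y) else 0))
      = (Icc 0 t).indicator (fun y =>
          ENNReal.ofReal (gpdf k r y * (1 - Real.exp (-(r * (t - y)))))) := by
    funext y
    by_cases hy : y ∈ Icc 0 t
    · rw [indicator_of_mem hy, gammaPDF, gammaPDFReal_eq_gpdf hk hy.1, if_pos (by linarith [hy.2]),
        ← ENNReal.ofReal_mul (gpdf_nonneg hr hy.1)]
      congr 1
      rw [gcdf]
      simp
    · rw [indicator_of_notMem hy]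
      rw [mem_Icc, not_and_or] at hy
      rcases hy with hy | hy
      · push_neg at hy
        rw [gammaPDF_of_neg hy, zero_mul]
      · push_neg at hy
        rw [if_neg (by linarith), ENNReal.ofReal_zero, mul_zero]
  rw [hpoint, lintegral_indicator measurableSet_Icc, hcast]
  have hcont : Continuous (fun y : ℝ => gpdf k r y * (1 - Real.exp (-(r * (t - y))))) :=
    (continuous_gpdf k r).mul (continuous_const.sub
      (Real.continuous_exp.comp ((continuous_const.mul (continuous_const.sub continuous_id)).neg)))
  by_cases ht : 0 ≤ t
  · rw [← ofReal_integral_eq_lintegral_ofReal]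
    · rw [gammaMeasure_Iic (by omega) hr, if_pos ht]
      congr 1
      rw [MeasureTheory.integral_Icc_eq_integral_Ioc, ← intervalIntegral.integral_of_le ht,
        conv_integral hk hr ht]
    · exact hcont.integrableOn_Icc
    · refine (ae_restrict_iff' measurableSet_Icc).2 (ae_of_all _ fun y hy => ?_)
      have h1 : 0 ≤ gpdf k r y := gpdf_nonneg hr hy.1
      have h2 : Real.exp (-(r * (t - y))) ≤ 1 := by
        rw [Real.exp_le_one_iff]
        nlinarith [hy.2]
      show (0:ℝ) ≤ gpdf k r y * (1 - Real.exp (-(r * (t - y))))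
      nlinarith
  · push_neg at ht
    rw [Icc_eq_empty (by linarith), Measure.restrict_empty, lintegral_zero_measure,
      gammaMeasure_Iic (by omega) hr, if_neg (by linarith), ENNReal.ofReal_zero]

lemma map_log_powerlaw {Ω : Type*} [MeasurableSpace Ω] {Pr : Measure Ω} [IsProbabilityMeasure Pr]
    {W : Ω → ℝ} (hW : Measurable W) {xmin α : ℝ} (hx : 0 < xmin) (hα : 1 < α)
    (hlaw : Measure.map W Pr = volume.withDensity (fun x =>
      ENNReal.ofReal (indicator (Ici xmin)
        (fun x => ((α - 1) / xmin) * (x / xmin) ^ (-α)) x))) :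
    Measure.map (fun ω => Real.log (W ω / xmin)) Pr = gammaMeasure 1 (α - 1) := by
  have hr : 0 < α - 1 := by linarith
  set g : ℝ → ℝ := fun x => Real.log (x / xmin) with hg_def
  have hg : Measurable g := Real.measurable_log.comp (measurable_id.div_const xmin)
  have hcomp : Measure.map (fun ω => Real.log (W ω / xmin)) Pr
      = Measure.map g (Measure.map W Pr) := by
    rw [Measure.map_map hg hW]; rfl
  rw [hcomp, hlaw]
  haveI : IsProbabilityMeasure (Measure.map W Pr) := Measure.isProbabilityMeasure_map hW.aemeasurable
  haveI : IsProbabilityMeasure (volume.withDensity (fun x =>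
      ENNReal.ofReal (indicator (Ici xmin)
        (fun x => ((α - 1) / xmin) * (x / xmin) ^ (-α)) x))) := by
    rw [← hlaw]; infer_instance
  haveI : IsProbabilityMeasure (Measure.map g (volume.withDensity (fun x =>
      ENNReal.ofReal (indicator (Ici xmin)
        (fun x => ((α - 1) / xmin) * (x / xmin) ^ (-α)) x)))) :=
    Measure.isProbabilityMeasure_map hg.aemeasurable
  haveI : IsProbabilityMeasure (gammaMeasure ((1:ℕ):ℝ) (α - 1)) :=
    isProbabilityMeasure_gammaMeasure (by norm_num) hr
  haveI : IsProbabilityMeasure (gammaMeasure (1:ℝ) (α - 1)) := by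
    simpa using ‹IsProbabilityMeasure (gammaMeasure ((1:ℕ):ℝ) (α - 1))›
  refine Measure.ext_of_Iic _ _ (fun t => ?_)
  rw [Measure.map_apply hg (measurableSet_Iic), withDensity_apply _ (hg measurableSet_Iic)]
  have hIic1 : gammaMeasure (1:ℝ) (α - 1) (Iic t)
      = ENNReal.ofReal (if 0 ≤ t then gcdf 1 (α - 1) t else 0) := by
    have := gammaMeasure_Iic (k := 1) le_rfl hr t
    simpa using this
  rw [hIic1]
  -- move the indicator into the set
  have hind : (fun x => ENNReal.ofReal (indicator (Ici xmin)
      (fun x => ((α - 1) / xmin) * (x / xmin) ^ (-α)) x))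
      = (Ici xmin).indicator (fun x => ENNReal.ofReal (((α - 1) / xmin) * (x / xmin) ^ (-α))) := by
    funext x
    by_cases hx' : x ∈ Ici xmin
    · rw [indicator_of_mem hx', indicator_of_mem hx']
    · rw [indicator_of_notMem hx', indicator_of_notMem hx', ENNReal.ofReal_zero]
  rw [hind, setLIntegral_indicator measurableSet_Ici]
  by_cases ht : 0 ≤ t
  · have hset : Ici xmin ∩ (g ⁻¹' Iic t) = Icc xmin (xmin * Real.exp t) := by
      ext x
      simp only [mem_inter_iff, mem_Ici, mem_preimage, mem_Iic, mem_Icc, hg_def]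
      constructor
      · rintro ⟨h1, h2⟩
        refine ⟨h1, ?_⟩
        have hxpos : 0 < x / xmin := div_pos (by linarith) hx
        have := (Real.log_le_iff_le_exp hxpos).1 h2
        rw [div_le_iff₀ hx] at this
        linarith [this]
      · rintro ⟨h1, h2⟩
        refine ⟨h1, ?_⟩
        have hxpos : 0 < x / xmin := div_pos (by linarith) hx
        rw [Real.log_le_iff_le_exp hxpos, div_le_iff₀ hx]
        linarith
    rw [hset, if_pos ht]
    have hb : xmin ≤ xmin * Real.exp t := by
      nlinarith [Real.one_le_exp ht, hx]
    have hq_nonneg : ∀ x ∈ Icc xmin (xmin * Real.exp t),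
        0 ≤ ((α - 1) / xmin) * (x / xmin) ^ (-α) := by
      intro x hx'
      have h0 : (0:ℝ) ≤ x / xmin := div_nonneg (le_trans hx.le hx'.1) hx.le
      exact mul_nonneg (div_nonneg (by linarith) hx.le) (Real.rpow_nonneg h0 _)
    have hq_cont : ContinuousOn (fun x : ℝ => ((α - 1) / xmin) * (x / xmin) ^ (-α))
        (Icc xmin (xmin * Real.exp t)) := by
      refine ContinuousOn.mul continuousOn_const ?_
      refine ContinuousOn.rpow_const (continuousOn_id.div_const xmin) (fun x hx' => Or.inl ?_)
      have : 0 < x / xmin := div_pos (by linarith [hx'.1]) hx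
      exact ne_of_gt this
    rw [← ofReal_integral_eq_lintegral_ofReal (hq_cont.integrableOn_Icc)
      ((ae_restrict_iff' measurableSet_Icc).2 (ae_of_all _ hq_nonneg))]
    congr 1
    -- real integral computation
    rw [MeasureTheory.integral_Icc_eq_integral_Ioc, ← intervalIntegral.integral_of_le hb]
    have hcongr : ∀ x ∈ uIcc xmin (xmin * Real.exp t),
        ((α - 1) / xmin) * (x / xmin) ^ (-α)
          = ((α - 1) * xmin ^ (α - 1)) * x ^ (-α) := by
      intro x hx'
      rw [uIcc_of_le hb] at hx'
      have hxpos : 0 < x := lt_of_lt_of_le hx hx'.1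
      rw [Real.div_rpow hxpos.le hx.le, Real.rpow_neg hx.le]
      rw [Real.rpow_sub hx, Real.rpow_one]
      field_simp
    have hnot : (0:ℝ) ∉ uIcc xmin (xmin * Real.exp t) := by
      rw [uIcc_of_le hb]
      intro h
      exact absurd h.1 (by linarith)
    rw [intervalIntegral.integral_congr hcongr, intervalIntegral.integral_const_mul,
      integral_rpow (Or.inr ⟨by linarith, hnot⟩)]
    have hexp : (xmin * Real.exp t) ^ (-α + 1) = xmin ^ (-α + 1) * Real.exp (-((α-1) * t)) := by
      rw [Real.mul_rpow hx.le (Real.exp_pos t).le]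
      congr 1
      rw [Real.rpow_def_of_pos (Real.exp_pos t), Real.log_exp]
      congr 1
      ring
    rw [hexp]
    have hxm : xmin ^ (α - 1) * xmin ^ (-α + 1) = 1 := by
      rw [← Real.rpow_add hx]
      norm_num
    rw [gcdf]
    simp only [Finset.range_one, Finset.sum_singleton, pow_zero, Nat.factorial_zero]
    have hne : -α + 1 ≠ 0 := by linarith
    field_simp
    linear_combination (α - 1) * (Real.exp (-((α - 1) * t)) - 1) * hxm
  · have hset : Ici xmin ∩ (g ⁻¹' Iic t) = ∅ := by
      ext x
      simp only [mem_inter_iff, mem_Ici, mem_preimage, mem_Iic, mem_empty_iff_false, iff_false,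
        not_and, not_le, hg_def]
      intro h1
      have h2 : (1:ℝ) ≤ x / xmin := (one_le_div hx).2 h1
      have := Real.log_nonneg h2
      linarith [not_le.1 ht]
    rw [hset, if_neg ht]
    simp

lemma integrableOn_rpow_exp {s b : ℝ} (hs : -1 < s) (hb : 0 < b) :
    IntegrableOn (fun x : ℝ => x ^ s * Real.exp (-(b * x))) (Ioi 0) := by
  have := integrableOn_rpow_mul_exp_neg_mul_rpow hs one_pos hb
  simpa [Real.rpow_one, neg_mul] using this

lemma expectation_gamma {n : ℕ} (hn : 2 ≤ n) {r : ℝ} (hr : 0 < r) :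
    ∫ t, (1 + (n : ℝ) / t) ∂(gammaMeasure n r) = 1 + n * r / ((n : ℝ) - 1) := by
  have hn1 : (1:ℝ) ≤ (n:ℝ) - 1 := by
    have : (2:ℝ) ≤ (n:ℝ) := by exact_mod_cast hn
    linarith
  have hnpos : (0:ℝ) < (n:ℝ) := by positivity
  rw [gammaMeasure]
  have hdens : (gammaPDF (n:ℝ) r)
      = fun x => ((gammaPDFReal (n:ℝ) r x).toNNReal : ENNReal) := rfl
  rw [hdens, integral_withDensity_eq_integral_smul
    ((measurable_gammaPDFReal (n:ℝ) r).real_toNNReal) _]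
  have hsmul : (fun x => (gammaPDFReal (n:ℝ) r x).toNNReal • (1 + (n:ℝ) / x))
      = fun x => gammaPDFReal (n:ℝ) r x * (1 + (n:ℝ) / x) := by
    funext x
    rw [NNReal.smul_def, smul_eq_mul, Real.coe_toNNReal _ (gammaPDFReal_nonneg hnpos hr x)]
  rw [hsmul]
  -- restrict to Ioi 0
  have hzero : (fun x => gammaPDFReal (n:ℝ) r x * (1 + (n:ℝ) / x))
      = (Ioi (0:ℝ)).indicator (fun x => gammaPDFReal (n:ℝ) r x * (1 + (n:ℝ) / x)) := by
    funext x
    by_cases hx : x ∈ Ioi (0:ℝ)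
    · rw [indicator_of_mem hx]
    · rw [indicator_of_notMem hx]
      rw [mem_Ioi, not_lt] at hx
      rcases lt_or_eq_of_le hx with hx' | hx'
      · rw [gammaPDFReal, if_neg (not_le.2 hx'), zero_mul]
      · subst hx'
        rw [gammaPDFReal, if_pos le_rfl, Real.zero_rpow (by linarith : (n:ℝ) - 1 ≠ 0)]
        ring
  rw [hzero, integral_indicator measurableSet_Ioi]
  set c : ℝ := r ^ (n:ℝ) / Real.Gamma (n:ℝ) with hc
  have hsplit : ∀ x ∈ Ioi (0:ℝ), gammaPDFReal (n:ℝ) r x * (1 + (n:ℝ) / x)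
      = c * (x ^ ((n:ℝ) - 1) * Real.exp (-(r * x)))
        + ((n:ℝ) * c) * (x ^ ((n:ℝ) - 1 - 1) * Real.exp (-(r * x))) := by
    intro x hx
    rw [mem_Ioi] at hx
    have hG : Real.Gamma ((n:ℝ)) ≠ 0 := ne_of_gt (Real.Gamma_pos_of_pos hnpos)
    have key : x ^ ((n:ℝ) - 1 - 1) = x ^ ((n:ℝ) - 1) / x := by
      rw [Real.rpow_sub hx, Real.rpow_one]
    rw [key, gammaPDFReal, if_pos hx.le, hc]
    have hxne : x ≠ 0 := ne_of_gt hx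
    field_simp
  rw [setIntegral_congr_fun measurableSet_Ioi hsplit]
  have hi1 : IntegrableOn (fun x : ℝ => x ^ ((n:ℝ) - 1) * Real.exp (-(r * x))) (Ioi 0) :=
    integrableOn_rpow_exp (by linarith) hr
  have hi2 : IntegrableOn (fun x : ℝ => x ^ ((n:ℝ) - 1 - 1) * Real.exp (-(r * x))) (Ioi 0) :=
    integrableOn_rpow_exp (by linarith) hr
  rw [integral_add ((hi1.const_mul c)) ((hi2.const_mul _)),
    integral_const_mul, integral_const_mul]
  have e1 : ∫ x in Ioi (0:ℝ), x ^ ((n:ℝ) - 1) * Real.exp (-(r * x))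
      = (1 / r) ^ (n:ℝ) * Real.Gamma (n:ℝ) := integral_rpow_mul_exp_neg_mul_Ioi hnpos hr
  have e2 : ∫ x in Ioi (0:ℝ), x ^ ((n:ℝ) - 1 - 1) * Real.exp (-(r * x))
      = (1 / r) ^ ((n:ℝ) - 1) * Real.Gamma ((n:ℝ) - 1) := by
    have := integral_rpow_mul_exp_neg_mul_Ioi (a := (n:ℝ) - 1) (by linarith) hr
    simpa using this
  rw [e1, e2, hc]
  have hGpos : 0 < Real.Gamma ((n:ℝ)) := Real.Gamma_pos_of_pos hnpos
  have hG1pos : 0 < Real.Gamma ((n:ℝ) - 1) := Real.Gamma_pos_of_pos (by linarith)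
  have hGrec : Real.Gamma ((n:ℝ)) = ((n:ℝ) - 1) * Real.Gamma ((n:ℝ) - 1) := by
    have := Real.Gamma_add_one (s := (n:ℝ) - 1) (by linarith : (n:ℝ) - 1 ≠ 0)
    rw [show (n:ℝ) - 1 + 1 = (n:ℝ) by ring] at this
    exact this
  have hApos : 0 < r ^ (n:ℝ) := Real.rpow_pos_of_pos hr _
  have hBpos : 0 < r ^ ((n:ℝ) - 1) := Real.rpow_pos_of_pos hr _
  have hAB : r ^ (n:ℝ) = r * r ^ ((n:ℝ) - 1) := by
    have h := Real.rpow_add hr 1 ((n:ℝ) - 1)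
    rw [show (1:ℝ) + ((n:ℝ) - 1) = (n:ℝ) by ring] at h
    rw [h, Real.rpow_one]
  rw [one_div, Real.inv_rpow hr.le, Real.inv_rpow hr.le, hGrec, hAB]
  have hne1 : ((n:ℝ) - 1) ≠ 0 := by linarith
  field_simp


lemma map_sum_gamma {Ω : Type*} [MeasurableSpace Ω] {Pr : Measure Ω} [IsProbabilityMeasure Pr]
    {n : ℕ} {Y : Fin n → Ω → ℝ} (hY : ∀ i, Measurable (Y i))
    (hind : iIndepFun Y Pr) {r : ℝ} (hr : 0 < r)
    (hlaw : ∀ i, Measure.map (Y i) Pr = gammaMeasure 1 r) :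
    ∀ s : Finset (Fin n), s.Nonempty →
      Measure.map (fun ω => ∑ i ∈ s, Y i ω) Pr = gammaMeasure (s.card) r := by
  intro s
  induction s using Finset.cons_induction with
  | empty => intro h; exact absurd h (by simp)
  | cons a s ha ih =>
      intro _
      rcases s.eq_empty_or_nonempty with rfl | hs
      · simp only [Finset.cons_empty, Finset.sum_singleton, Finset.card_singleton]
        rw [hlaw a]
        norm_num
      · have hsum : Measurable (fun ω => ∑ i ∈ s, Y i ω) :=
          Finset.measurable_sum s (fun i _ => hY i)
        have hindf : IndepFun (fun ω => ∑ i ∈ s, Y i ω) (Y a) Pr := by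
          have := hind.indepFun_finset_sum_of_notMem hY ha
          rwa [show (∑ j ∈ s, Y j) = fun ω => ∑ j ∈ s, Y j ω from
            funext (fun ω => Finset.sum_apply ω s Y)] at this
        have hcard : 1 ≤ s.card := Finset.card_pos.2 hs
        have := map_add_gamma hsum (hY a) hindf hcard hr (ih hs) (hlaw a)
        have hfun : (fun ω => ∑ i ∈ Finset.cons a s ha, Y i ω)
            = (fun ω => (∑ i ∈ s, Y i ω) + Y a ω) := by
          funext ω
          rw [Finset.sum_cons]
          ring
        rw [hfun, this, Finset.card_cons]
        norm_num

end PLAux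

open PLAux in
/-- If `X_1, ..., X_n` are i.i.d. continuous power-law with parameter `α > 1` and
lower bound `x_min`, then `Σ ln(X_i/x_min)` is Gamma-distributed with shape `n`
and rate `α - 1`; consequently, for `n ≥ 2`, the MLE
`α̂ = 1 + n/(Σ ln(X_i/x_min))` has expectation `(nα - 1)/(n - 1)`. -/
theorem powerlaw_mle_gamma_and_mean
    {Ω : Type*} [MeasurableSpace Ω] (Pr : Measure Ω) [IsProbabilityMeasure Pr]
    (n : ℕ) (hn : 1 ≤ n) (X : Fin n → Ω → ℝ) (hX : ∀ i, Measurable (X i))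
    (xmin α : ℝ) (hx : 0 < xmin) (hα : 1 < α)
    (hindep : iIndepFun X Pr)
    (hlaw : ∀ i, Measure.map (X i) Pr = volume.withDensity (fun x =>
      ENNReal.ofReal (indicator (Ici xmin)
        (fun x => ((α - 1) / xmin) * (x / xmin) ^ (-α)) x))) :
    Measure.map (fun ω => ∑ i, Real.log (X i ω / xmin)) Pr
        = gammaMeasure n (α - 1) ∧
    (2 ≤ n →
      (∫ ω, (1 + n / ∑ i, Real.log (X i ω / xmin)) ∂Pr)
        = (n * α - 1) / (n - 1)) := by
  have hr : 0 < α - 1 := by linarith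
  set Y : Fin n → Ω → ℝ := fun i ω => Real.log (X i ω / xmin) with hY_def
  have hYm : ∀ i, Measurable (Y i) := fun i =>
    (Real.measurable_log.comp (measurable_id.div_const xmin)).comp (hX i)
  have hYind : iIndepFun Y Pr :=
    hindep.comp (fun _ x => Real.log (x / xmin))
      (fun _ => Real.measurable_log.comp (measurable_id.div_const xmin))
  have hYlaw : ∀ i, Measure.map (Y i) Pr = gammaMeasure 1 (α - 1) := fun i =>
    map_log_powerlaw (hX i) hx hα (hlaw i)
  have hne : (Finset.univ : Finset (Fin n)).Nonempty := by
    refine ⟨⟨0, hn⟩, Finset.mem_univ _⟩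
  have hmain : Measure.map (fun ω => ∑ i, Y i ω) Pr
      = gammaMeasure ((Finset.univ : Finset (Fin n)).card) (α - 1) :=
    map_sum_gamma hYm hYind hr hYlaw Finset.univ hne
  rw [Finset.card_univ, Fintype.card_fin] at hmain
  refine ⟨hmain, fun hn2 => ?_⟩
  have hTm : Measurable (fun ω => ∑ i, Y i ω) :=
    Finset.measurable_sum _ (fun i _ => hYm i)
  have hfm : Measurable (fun t : ℝ => 1 + (n : ℝ) / t) :=
    measurable_const.add (measurable_const.div measurable_id)
  have hint := MeasureTheory.integral_map (μ := Pr) (φ := fun ω => ∑ i, Y i ω)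
    (f := fun t : ℝ => 1 + (n : ℝ) / t) hTm.aemeasurable
    hfm.aestronglyMeasurable
  rw [hmain] at hint
  rw [← hint, expectation_gamma hn2 hr]
  have hn1 : (n:ℝ) - 1 ≠ 0 := by
    have : (2:ℝ) ≤ (n:ℝ) := by exact_mod_cast hn2
    linarith
  field_simp
  ring
end

section
/- For n ≥ 3, the MLE α̂ = 1 + n/(Σ ln(X_i/x_min)) from i.i.d. continuous power-law data with parameter α has standard deviation n(α−1)/((n−1)√(n−2)). -/
open MeasureTheory Set ProbabilityTheory
open Filter
open scoped NNReal ENNReal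

private lemma aux_tendsto_exp {t : ℝ} (ht : 0 < t) (k : ℕ) :
    Tendsto (fun s : ℝ => s ^ k * Real.exp (-(s * t))) atTop (nhds 0) := by
  have h1 : Tendsto (fun s : ℝ => s * t) atTop atTop :=
    Tendsto.atTop_mul_const ht tendsto_id
  have h2 := (Real.tendsto_pow_mul_exp_neg_atTop_nhds_zero k).comp h1
  have h3 := h2.div_const (t ^ k)
  rw [zero_div] at h3
  refine h3.congr fun s => ?_
  have htk : (t : ℝ) ^ k ≠ 0 := pow_ne_zero _ ht.ne'
  field_simp [Function.comp, mul_pow]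
  simp only [Function.comp_apply]
  ring

private lemma aux_int_exp {t : ℝ} (ht : 0 < t) :
    IntegrableOn (fun s : ℝ => Real.exp (-(s * t))) (Ioi 0) ∧
      ∫ s in Ioi (0:ℝ), Real.exp (-(s * t)) = 1 / t := by
  have hderiv : ∀ s ∈ Ici (0:ℝ), HasDerivAt (fun s : ℝ => -Real.exp (-(s * t)) / t)
      (Real.exp (-(s * t))) s := by
    intro s _
    have h1 : HasDerivAt (fun s : ℝ => -(s * t)) (-t) s := by
      have h := ((hasDerivAt_id' s).mul_const t).neg; rwa [one_mul] at h
    have h2 := (Real.hasDerivAt_exp (-(s * t))).comp s h1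
    have h3 := h2.neg.div_const t
    refine h3.congr_deriv ?_
    field_simp
  have hpos : ∀ s ∈ Ioi (0:ℝ), 0 ≤ Real.exp (-(s * t)) := fun s _ => (Real.exp_pos _).le
  have htt : Tendsto (fun s : ℝ => -Real.exp (-(s * t)) / t) atTop (nhds 0) := by
    have h0 := (aux_tendsto_exp ht 0).neg.div_const t
    rw [neg_zero, zero_div] at h0
    refine h0.congr fun s => by simp
  refine ⟨integrableOn_Ioi_deriv_of_nonneg' hderiv hpos htt, ?_⟩
  rw [integral_Ioi_of_hasDerivAt_of_nonneg' hderiv hpos htt]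
  simp [Real.exp_zero]
  ring

private lemma aux_int_exp2 {t : ℝ} (ht : 0 < t) :
    IntegrableOn (fun s : ℝ => s * Real.exp (-(s * t))) (Ioi 0) ∧
      ∫ s in Ioi (0:ℝ), s * Real.exp (-(s * t)) = 1 / t ^ 2 := by
  have hderiv : ∀ s ∈ Ici (0:ℝ),
      HasDerivAt (fun s : ℝ => (-(s / t) - 1 / t ^ 2) * Real.exp (-(s * t)))
        (s * Real.exp (-(s * t))) s := by
    intro s _
    have h1 : HasDerivAt (fun s : ℝ => -(s * t)) (-t) s := by
      have h := ((hasDerivAt_id' s).mul_const t).neg; rwa [one_mul] at h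
    have h2 : HasDerivAt (fun s : ℝ => Real.exp (-(s * t))) (Real.exp (-(s * t)) * (-t)) s :=
      (Real.hasDerivAt_exp _).comp s h1
    have h3 : HasDerivAt (fun s : ℝ => -(s / t) - 1 / t ^ 2) (-(1 / t)) s :=
      ((hasDerivAt_id s).div_const t).neg.sub_const (1 / t ^ 2)
    have h4 := h3.mul h2
    refine h4.congr_deriv ?_
    field_simp
    ring
  have hpos : ∀ s ∈ Ioi (0:ℝ), 0 ≤ s * Real.exp (-(s * t)) :=
    fun s hs => mul_nonneg (le_of_lt hs) (Real.exp_pos _).le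
  have htt : Tendsto (fun s : ℝ => (-(s / t) - 1 / t ^ 2) * Real.exp (-(s * t))) atTop (nhds 0) := by
    have h1 := ((aux_tendsto_exp ht 1).const_mul (-(1/t))).add
      ((aux_tendsto_exp ht 0).const_mul (-(1/t^2)))
    rw [mul_zero, mul_zero, add_zero] at h1
    refine h1.congr fun s => ?_
    simp only [pow_one, pow_zero, one_mul]
    ring
  refine ⟨integrableOn_Ioi_deriv_of_nonneg' hderiv hpos htt, ?_⟩
  rw [integral_Ioi_of_hasDerivAt_of_nonneg' hderiv hpos htt]
  simp [Real.exp_zero]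

private lemma aux_int_rpow {c : ℝ} (p : ℝ) (hc : 0 < c) (hp : p < -1) :
    IntegrableOn (fun s : ℝ => (c + s) ^ p) (Ioi 0) ∧
      ∫ s in Ioi (0:ℝ), (c + s) ^ p = c ^ (p + 1) / (-(p + 1)) := by
  have hne : p + 1 ≠ 0 := by linarith
  have hderiv : ∀ s ∈ Ici (0:ℝ), HasDerivAt (fun s : ℝ => (c + s) ^ (p + 1) / (p + 1))
      ((c + s) ^ p) s := by
    intro s hs
    have hcs : (0:ℝ) < c + s := by simp only [mem_Ici] at hs; linarith
    have h1 : HasDerivAt (fun s : ℝ => c + s) 1 s := (hasDerivAt_id s).const_add c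
    have h2 := (h1.rpow_const (p := p + 1) (Or.inl hcs.ne')).div_const (p + 1)
    refine h2.congr_deriv ?_
    rw [add_sub_cancel_right]
    field_simp
  have hpos : ∀ s ∈ Ioi (0:ℝ), 0 ≤ (c + s) ^ p := by
    intro s hs
    simp only [mem_Ioi] at hs
    exact Real.rpow_nonneg (by linarith) p
  have htt : Tendsto (fun s : ℝ => (c + s) ^ (p + 1) / (p + 1)) atTop (nhds 0) := by
    have h0 : Tendsto (fun x : ℝ => x ^ (p + 1)) atTop (nhds 0) := by
      simpa [neg_neg] using tendsto_rpow_neg_atTop (y := -(p + 1)) (by linarith)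
    have h1 : Tendsto (fun s : ℝ => c + s) atTop atTop :=
      tendsto_atTop_add_const_left _ c tendsto_id
    simpa [zero_div] using (h0.comp h1).div_const (p + 1)
  refine ⟨integrableOn_Ioi_deriv_of_nonneg' hderiv hpos htt, ?_⟩
  rw [integral_Ioi_of_hasDerivAt_of_nonneg' hderiv hpos htt]
  rw [add_zero, div_neg]
  ring

set_option maxHeartbeats 1000000 in
private lemma aux_int_rpow2 {c : ℝ} (p : ℝ) (hc : 0 < c) (hp : p < -2) :
    IntegrableOn (fun s : ℝ => s * (c + s) ^ p) (Ioi 0) ∧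
      ∫ s in Ioi (0:ℝ), s * (c + s) ^ p = c ^ (p + 2) / ((p + 1) * (p + 2)) := by
  have hne1 : p + 1 ≠ 0 := by linarith
  have hne2 : p + 2 ≠ 0 := by linarith
  have hderiv : ∀ s ∈ Ici (0:ℝ),
      HasDerivAt (fun s : ℝ => (c + s) ^ (p + 2) / (p + 2) - c * ((c + s) ^ (p + 1) / (p + 1)))
        (s * (c + s) ^ p) s := by
    intro s hs
    have hcs : (0:ℝ) < c + s := by simp only [mem_Ici] at hs; linarith
    have h1 : HasDerivAt (fun s : ℝ => c + s) 1 s := (hasDerivAt_id s).const_add c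
    have h2 := (h1.rpow_const (p := p + 2) (Or.inl hcs.ne')).div_const (p + 2)
    have h3 := ((h1.rpow_const (p := p + 1) (Or.inl hcs.ne')).div_const (p + 1)).const_mul c
    have h4 := h2.sub h3
    have heq : s * (c + s) ^ p
        = 1 * (p + 2) * (c + s) ^ (p + 2 - 1) / (p + 2)
          - c * (1 * (p + 1) * (c + s) ^ (p + 1 - 1) / (p + 1)) := by
      rw [show p + 2 - 1 = p + 1 by ring, show p + 1 - 1 = p by ring, one_mul, one_mul]
      rw [mul_comm (p+2) ((c+s)^(p+1)), mul_div_assoc, div_self hne2, mul_one]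
      rw [mul_comm (p+1) ((c+s)^p), mul_div_assoc, div_self hne1, mul_one]
      rw [Real.rpow_add_one hcs.ne' p]
      ring
    rw [heq]
    exact h4
  have hpos : ∀ s ∈ Ioi (0:ℝ), 0 ≤ s * (c + s) ^ p := by
    intro s hs
    simp only [mem_Ioi] at hs
    exact mul_nonneg hs.le (Real.rpow_nonneg (by linarith) p)
  have htt : Tendsto (fun s : ℝ => (c + s) ^ (p + 2) / (p + 2) - c * ((c + s) ^ (p + 1) / (p + 1)))
      atTop (nhds 0) := by
    have h1 : Tendsto (fun s : ℝ => c + s) atTop atTop :=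
      tendsto_atTop_add_const_left _ c tendsto_id
    have h0 : Tendsto (fun x : ℝ => x ^ (p + 2)) atTop (nhds 0) := by
      simpa [neg_neg] using tendsto_rpow_neg_atTop (y := -(p + 2)) (by linarith)
    have h0' : Tendsto (fun x : ℝ => x ^ (p + 1)) atTop (nhds 0) := by
      simpa [neg_neg] using tendsto_rpow_neg_atTop (y := -(p + 1)) (by linarith)
    have := ((h0.comp h1).div_const (p + 2)).sub (((h0'.comp h1).div_const (p + 1)).const_mul c)
    simpa using this
  refine ⟨integrableOn_Ioi_deriv_of_nonneg' hderiv hpos htt, ?_⟩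
  rw [integral_Ioi_of_hasDerivAt_of_nonneg' hderiv hpos htt]
  rw [add_zero]
  have hrw : c ^ (p + 2) = c ^ (p + 1) * c := by
    rw [show p + 2 = p + 1 + 1 by ring, Real.rpow_add_one hc.ne']
  rw [hrw]
  field_simp
  ring

private lemma aux_lint_exp {t : ℝ} (ht : 0 < t) :
    ∫⁻ s in Ioi (0:ℝ), ENNReal.ofReal (Real.exp (-(s * t))) = ENNReal.ofReal (1 / t) := by
  rw [← (aux_int_exp ht).2]
  exact (ofReal_integral_eq_lintegral_ofReal (aux_int_exp ht).1
    (ae_of_all _ fun s => (Real.exp_pos _).le)).symm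

private lemma aux_lint_exp2 {t : ℝ} (ht : 0 < t) :
    ∫⁻ s in Ioi (0:ℝ), ENNReal.ofReal (s * Real.exp (-(s * t)))
      = ENNReal.ofReal ((1 / t) ^ 2) := by
  have h : ((1:ℝ) / t) ^ 2 = 1 / t ^ 2 := by rw [div_pow, one_pow]
  rw [h, ← (aux_int_exp2 ht).2]
  refine (ofReal_integral_eq_lintegral_ofReal (aux_int_exp2 ht).1 ?_).symm
  filter_upwards [ae_restrict_mem measurableSet_Ioi] with s hs
  exact mul_nonneg (le_of_lt hs) (Real.exp_pos _).le

private lemma gamma_variance {Ω : Type*} [MeasurableSpace Ω] (Pr : Measure Ω)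
    [IsProbabilityMeasure Pr] (n : ℕ) (hn : 3 ≤ n) (T : Ω → ℝ) (hTm : Measurable T)
    (hTpos : ∀ᵐ ω ∂Pr, 0 < T ω) (c : ℝ) (hc : 0 < c)
    (hexp : ∀ s : ℝ, 0 ≤ s → ∫ ω, Real.exp (-(s * T ω)) ∂Pr = (c / (c + s)) ^ n) :
    variance (fun ω => 1 + n / T ω) Pr
      = (n:ℝ) ^ 2 * c ^ 2 / (((n:ℝ) - 1) ^ 2 * ((n:ℝ) - 2)) := by
  have ha : (3:ℝ) ≤ (n:ℝ) := by exact_mod_cast hn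
  have ha1 : (0:ℝ) < (n:ℝ) - 1 := by linarith
  have ha2 : (0:ℝ) < (n:ℝ) - 2 := by linarith
  have hpn1 : (-(n:ℝ)) < -1 := by linarith
  have hpn2 : (-(n:ℝ)) < -2 := by linarith
  -- integrability of exp(-(s T))
  have hmexp : ∀ s : ℝ, Measurable fun ω => Real.exp (-(s * T ω)) :=
    fun s => (Real.measurable_exp.comp ((hTm.const_mul s).neg))
  have hint : ∀ s : ℝ, 0 ≤ s → Integrable (fun ω => Real.exp (-(s * T ω))) Pr := by
    intro s hs
    refine Integrable.mono' (integrable_const (1:ℝ)) (hmexp s).aestronglyMeasurable ?_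
    filter_upwards [hTpos] with ω hω
    rw [Real.norm_eq_abs, abs_of_pos (Real.exp_pos _)]
    exact Real.exp_le_one_iff.2 (by nlinarith)
  have hlint : ∀ s : ℝ, 0 ≤ s →
      ∫⁻ ω, ENNReal.ofReal (Real.exp (-(s * T ω))) ∂Pr
        = ENNReal.ofReal ((c / (c + s)) ^ n) := by
    intro s hs
    rw [← hexp s hs]
    exact (ofReal_integral_eq_lintegral_ofReal (hint s hs)
      (ae_of_all _ fun ω => (Real.exp_pos _).le)).symm
  have hmeas2 : Measurable (Function.uncurry fun (ω : Ω) (s : ℝ) =>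
      ENNReal.ofReal (Real.exp (-(s * T ω)))) := by
    apply ENNReal.measurable_ofReal.comp
    exact Real.measurable_exp.comp ((measurable_snd.mul (hTm.comp measurable_fst)).neg)
  -- value of ∫ (c/(c+s))^n ds and moments
  have hrw1 : ∀ s ∈ Ioi (0:ℝ), ((c / (c + s)) ^ n : ℝ) = c ^ n * (c + s) ^ (-(n:ℝ)) := by
    intro s hs
    simp only [mem_Ioi] at hs
    have h1 : (0:ℝ) < c + s := by linarith
    rw [div_pow, Real.rpow_neg h1.le, Real.rpow_natCast, div_eq_mul_inv]
  have hcn : (c:ℝ) ^ n * c ^ (-(n:ℝ) + 1) = c := by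
    rw [← Real.rpow_natCast c n, ← Real.rpow_add hc, show (n:ℝ) + (-(n:ℝ) + 1) = 1 by ring,
      Real.rpow_one]
  have hcn2 : (c:ℝ) ^ n * c ^ (-(n:ℝ) + 2) = c ^ 2 := by
    rw [← Real.rpow_natCast c n, ← Real.rpow_add hc, show (n:ℝ) + (-(n:ℝ) + 2) = 2 by ring]
    norm_num
  -- first moment
  have hA : ∫⁻ ω, ENNReal.ofReal (1 / T ω) ∂Pr = ENNReal.ofReal (c / ((n:ℝ) - 1)) := by
    have e1 : ∫⁻ ω, ENNReal.ofReal (1 / T ω) ∂Pr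
        = ∫⁻ ω, ∫⁻ s in Ioi (0:ℝ), ENNReal.ofReal (Real.exp (-(s * T ω))) ∂volume ∂Pr := by
      refine lintegral_congr_ae ?_
      filter_upwards [hTpos] with ω hω
      rw [aux_lint_exp hω]
    rw [e1, lintegral_lintegral_swap hmeas2.aemeasurable]
    have e2 : ∫⁻ s in Ioi (0:ℝ), ∫⁻ ω, ENNReal.ofReal (Real.exp (-(s * T ω))) ∂Pr ∂volume
        = ∫⁻ s in Ioi (0:ℝ), ENNReal.ofReal (c ^ n * (c + s) ^ (-(n:ℝ))) ∂volume := by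
      refine setLIntegral_congr_fun measurableSet_Ioi (fun s hs => ?_)
      rw [hlint s (le_of_lt hs), hrw1 s hs]
    rw [e2]
    have hint3 : IntegrableOn (fun s : ℝ => c ^ n * (c + s) ^ (-(n:ℝ))) (Ioi 0) :=
      ((aux_int_rpow (-(n:ℝ)) hc hpn1).1).const_mul _
    rw [← ofReal_integral_eq_lintegral_ofReal hint3 ?nn]
    case nn =>
      filter_upwards [ae_restrict_mem measurableSet_Ioi] with s hs
      simp only [mem_Ioi] at hs
      exact mul_nonneg (pow_nonneg hc.le _) (Real.rpow_nonneg (by linarith) _)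
    rw [integral_const_mul, (aux_int_rpow (-(n:ℝ)) hc hpn1).2]
    congr 1
    rw [← mul_div_assoc, hcn]
    congr 1
    ring
  -- second moment
  have hB : ∫⁻ ω, ENNReal.ofReal ((1 / T ω) ^ 2) ∂Pr
      = ENNReal.ofReal (c ^ 2 / (((n:ℝ) - 1) * ((n:ℝ) - 2))) := by
    have e1 : ∫⁻ ω, ENNReal.ofReal ((1 / T ω) ^ 2) ∂Pr
        = ∫⁻ ω, ∫⁻ s in Ioi (0:ℝ), ENNReal.ofReal (s * Real.exp (-(s * T ω))) ∂volume ∂Pr := by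
      refine lintegral_congr_ae ?_
      filter_upwards [hTpos] with ω hω
      rw [aux_lint_exp2 hω]
    have hmeas2' : Measurable (Function.uncurry fun (ω : Ω) (s : ℝ) =>
        ENNReal.ofReal (s * Real.exp (-(s * T ω)))) := by
      apply ENNReal.measurable_ofReal.comp
      exact measurable_snd.mul (Real.measurable_exp.comp
        ((measurable_snd.mul (hTm.comp measurable_fst)).neg))
    rw [e1, lintegral_lintegral_swap hmeas2'.aemeasurable]
    have e2 : ∫⁻ s in Ioi (0:ℝ), ∫⁻ ω, ENNReal.ofReal (s * Real.exp (-(s * T ω))) ∂Pr ∂volume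
        = ∫⁻ s in Ioi (0:ℝ), ENNReal.ofReal (c ^ n * (s * (c + s) ^ (-(n:ℝ)))) ∂volume := by
      refine setLIntegral_congr_fun measurableSet_Ioi (fun s hs => ?_)
      simp only [mem_Ioi] at hs
      have : ∫⁻ ω, ENNReal.ofReal (s * Real.exp (-(s * T ω))) ∂Pr
          = ENNReal.ofReal s * ∫⁻ ω, ENNReal.ofReal (Real.exp (-(s * T ω))) ∂Pr := by
        rw [← lintegral_const_mul _ ((hmexp s).ennreal_ofReal)]
        exact lintegral_congr fun ω => ENNReal.ofReal_mul hs.le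
      rw [this, hlint s hs.le, ← ENNReal.ofReal_mul hs.le, hrw1 s hs]
      congr 1
      ring
    rw [e2]
    have hint3 : IntegrableOn (fun s : ℝ => c ^ n * (s * (c + s) ^ (-(n:ℝ)))) (Ioi 0) :=
      ((aux_int_rpow2 (-(n:ℝ)) hc hpn2).1).const_mul _
    rw [← ofReal_integral_eq_lintegral_ofReal hint3 ?nn2]
    case nn2 =>
      filter_upwards [ae_restrict_mem measurableSet_Ioi] with s hs
      simp only [mem_Ioi] at hs
      exact mul_nonneg (pow_nonneg hc.le _)
        (mul_nonneg hs.le (Real.rpow_nonneg (by linarith) _))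
    rw [integral_const_mul, (aux_int_rpow2 (-(n:ℝ)) hc hpn2).2]
    congr 1
    rw [← mul_div_assoc, hcn2]
    congr 1
    ring
  -- Bochner integrability and values
  have hmi : Measurable fun ω => 1 / T ω := measurable_const.div hTm
  have hnnA : 0 ≤ᵐ[Pr] fun ω => 1 / T ω := by
    filter_upwards [hTpos] with ω hω; positivity
  have hnnB : 0 ≤ᵐ[Pr] fun ω => (1 / T ω) ^ 2 := ae_of_all _ fun ω => sq_nonneg _
  have hIA : Integrable (fun ω => 1 / T ω) Pr := by
    refine ⟨hmi.aestronglyMeasurable, ?_⟩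
    rw [hasFiniteIntegral_iff_ofReal hnnA, hA]
    exact ENNReal.ofReal_lt_top
  have hIB : Integrable (fun ω => (1 / T ω) ^ 2) Pr := by
    refine ⟨(hmi.pow_const 2).aestronglyMeasurable, ?_⟩
    rw [hasFiniteIntegral_iff_ofReal hnnB, hB]
    exact ENNReal.ofReal_lt_top
  have hEA : ∫ ω, 1 / T ω ∂Pr = c / ((n:ℝ) - 1) := by
    rw [integral_eq_lintegral_of_nonneg_ae hnnA hmi.aestronglyMeasurable, hA,
      ENNReal.toReal_ofReal (div_nonneg hc.le ha1.le)]
  have hEB : ∫ ω, (1 / T ω) ^ 2 ∂Pr = c ^ 2 / (((n:ℝ) - 1) * ((n:ℝ) - 2)) := by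
    rw [integral_eq_lintegral_of_nonneg_ae hnnB (hmi.pow_const 2).aestronglyMeasurable, hB,
      ENNReal.toReal_ofReal (div_nonneg (sq_nonneg c) (by positivity))]
  -- Memℒp
  have hM : MemLp (fun ω => 1 + (n:ℝ) / T ω) 2 Pr := by
    have h1 : MemLp (fun ω => 1 / T ω) 2 Pr := by
      rw [memLp_two_iff_integrable_sq hmi.aestronglyMeasurable]
      exact hIB
    have h2 := (memLp_const (μ := Pr) (p := 2) (1:ℝ)).add (h1.const_mul (n:ℝ))
    have heq : ((fun _ : Ω => (1:ℝ)) + fun ω => (n:ℝ) * (1 / T ω))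
        = fun ω => 1 + (n:ℝ) / T ω := by
      funext ω; simp [mul_one_div, div_eq_mul_inv]
    rwa [heq] at h2
  rw [variance_eq_sub hM]
  have hEf : ∫ ω, (1 + (n:ℝ) / T ω) ∂Pr = 1 + (n:ℝ) * (c / ((n:ℝ) - 1)) := by
    rw [show (fun ω => 1 + (n:ℝ) / T ω) = fun ω => 1 + (n:ℝ) * (1 / T ω) by
      funext ω; rw [mul_one_div]]
    rw [integral_add (integrable_const 1) (hIA.const_mul _), integral_const,
      integral_const_mul, hEA]
    simp [measure_univ]
  have hEf2 : ∫ ω, (1 + (n:ℝ) / T ω) ^ 2 ∂Pr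
      = 1 + 2 * (n:ℝ) * (c / ((n:ℝ) - 1))
        + (n:ℝ) ^ 2 * (c ^ 2 / (((n:ℝ) - 1) * ((n:ℝ) - 2))) := by
    have hpt : (fun ω => (1 + (n:ℝ) / T ω) ^ 2)
        = fun ω => 1 + (2 * (n:ℝ)) * (1 / T ω) + (n:ℝ) ^ 2 * (1 / T ω) ^ 2 := by
      funext ω
      field_simp
      ring
    have hI1 : Integrable (fun ω => 1 + 2 * (n:ℝ) * (1 / T ω)) Pr :=
      (integrable_const (1:ℝ)).add (hIA.const_mul (2 * (n:ℝ)))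
    rw [hpt, integral_add hI1 (hIB.const_mul _),
      integral_add (integrable_const 1) (hIA.const_mul _),
      integral_const, integral_const_mul, integral_const_mul, hEA, hEB]
    simp [measure_univ]
  have hbridge : Pr[(fun ω => 1 + (n:ℝ) / T ω) ^ 2] = ∫ ω, (1 + (n:ℝ) / T ω) ^ 2 ∂Pr := by
    congr 1
  rw [hbridge, hEf2, hEf]
  field_simp
  ring

/-- For `n ≥ 3`, the MLE `α̂ = 1 + n/(Σ ln(X_i/x_min))` from i.i.d. continuous
power-law data with parameter `α` has standard deviation
`n(α-1)/((n-1)√(n-2))`. -/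
theorem powerlaw_mle_stddev
    {Ω : Type*} [MeasurableSpace Ω] (Pr : Measure Ω) [IsProbabilityMeasure Pr]
    (n : ℕ) (hn : 3 ≤ n) (X : Fin n → Ω → ℝ) (hX : ∀ i, Measurable (X i))
    (xmin α : ℝ) (hx : 0 < xmin) (hα : 1 < α)
    (hindep : iIndepFun X Pr)
    (hlaw : ∀ i, Measure.map (X i) Pr = volume.withDensity (fun x =>
      ENNReal.ofReal (indicator (Ici xmin)
        (fun x => ((α - 1) / xmin) * (x / xmin) ^ (-α)) x))) :
    Real.sqrt (variance (fun ω => 1 + n / ∑ i, Real.log (X i ω / xmin)) Pr)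
      = n * (α - 1) / ((n - 1) * Real.sqrt (n - 2)) := by
  have hl : (0:ℝ) < α - 1 := by linarith
  have ha : (3:ℝ) ≤ (n:ℝ) := by exact_mod_cast hn
  have ha1 : (0:ℝ) < (n:ℝ) - 1 := by linarith
  have ha2 : (0:ℝ) < (n:ℝ) - 2 := by linarith
  -- measurability of the density
  have hρm : Measurable fun x : ℝ =>
      Real.toNNReal (indicator (Ici xmin) (fun x => ((α - 1) / xmin) * (x / xmin) ^ (-α)) x) := by
    apply measurable_real_toNNReal.comp
    exact (((measurable_id.div_const xmin).pow_const (-α)).const_mul _).indicator measurableSet_Ici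
  have hρnn : ∀ x : ℝ, 0 ≤ indicator (Ici xmin) (fun x => ((α - 1) / xmin) * (x / xmin) ^ (-α)) x := by
    intro x
    refine indicator_nonneg (fun y hy => ?_) x
    have hy0 : (0:ℝ) < y := lt_of_lt_of_le hx hy
    exact mul_nonneg (div_nonneg (by linarith) hx.le) (Real.rpow_nonneg (by positivity) _)
  -- a.e. xmin < X i ω
  have hXgt : ∀ i, ∀ᵐ ω ∂Pr, xmin < X i ω := by
    intro i
    have h0 : (Measure.map (X i) Pr) (Iic xmin) = 0 := by
      rw [hlaw i, withDensity_apply _ measurableSet_Iic,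
        setLIntegral_congr (Iio_ae_eq_Iic (a := xmin) (μ := volume)).symm]
      rw [setLIntegral_congr_fun (g := fun _ => 0) measurableSet_Iio
        (fun x (hxx : x < xmin) => ?_), lintegral_zero]
      rw [indicator_of_notMem (by simpa using not_le.2 hxx)]
      simp
    rw [Measure.map_apply (hX i) measurableSet_Iic] at h0
    refine ae_iff.2 ?_
    have : {ω | ¬ xmin < X i ω} = X i ⁻¹' Iic xmin := by ext ω; simp [not_lt]
    rw [this]; exact h0
  -- T is a.e. positive
  have hTpos : ∀ᵐ ω ∂Pr, 0 < ∑ i, Real.log (X i ω / xmin) := by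
    have hae : ∀ᵐ ω ∂Pr, ∀ i, xmin < X i ω := ae_all_iff.2 hXgt
    filter_upwards [hae] with ω hω
    have hne : (Finset.univ : Finset (Fin n)).Nonempty :=
      ⟨⟨0, by omega⟩, Finset.mem_univ _⟩
    refine Finset.sum_pos (fun i _ => Real.log_pos ((one_lt_div hx).2 (hω i))) hne
  -- measurability of T
  have hTm : Measurable fun ω => ∑ i, Real.log (X i ω / xmin) :=
    Finset.measurable_sum Finset.univ
      (fun i _ => Real.measurable_log.comp ((hX i).div_const xmin))
  -- per-coordinate moment
  have hmom : ∀ (i : Fin n) (s : ℝ), 0 ≤ s →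
      ∫ ω, Real.exp (-(s * Real.log (X i ω / xmin))) ∂Pr = (α - 1) / (α - 1 + s) := by
    intro i s hs
    have hq : -α - s < -1 := by linarith
    have hgm : Measurable fun x : ℝ => Real.exp (-(s * Real.log (x / xmin))) :=
      Real.measurable_exp.comp (((Real.measurable_log.comp (measurable_id.div_const xmin)).const_mul s).neg)
    have step1 : ∫ ω, Real.exp (-(s * Real.log (X i ω / xmin))) ∂Pr
        = ∫ x, Real.exp (-(s * Real.log (x / xmin))) ∂(Measure.map (X i) Pr) :=
      (integral_map (hX i).aemeasurable hgm.aestronglyMeasurable).symm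
    rw [step1, hlaw i]
    have hwd : (fun x : ℝ => ENNReal.ofReal
        (indicator (Ici xmin) (fun x => ((α - 1) / xmin) * (x / xmin) ^ (-α)) x))
        = fun x : ℝ => ((Real.toNNReal
          (indicator (Ici xmin) (fun x => ((α - 1) / xmin) * (x / xmin) ^ (-α)) x) : ℝ≥0) : ℝ≥0∞) :=
      rfl
    rw [hwd, integral_withDensity_eq_integral_smul hρm]
    have step2 : (fun x : ℝ => (Real.toNNReal
          (indicator (Ici xmin) (fun x => ((α - 1) / xmin) * (x / xmin) ^ (-α)) x))
          • Real.exp (-(s * Real.log (x / xmin))))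
        = indicator (Ici xmin)
            (fun x => ((α - 1) / (xmin * xmin ^ (-α - s))) * x ^ (-α - s)) := by
      funext x
      by_cases hmem : x ∈ Ici xmin
      · have hx0 : (0:ℝ) < x := lt_of_lt_of_le hx hmem
        have hu : (0:ℝ) < x / xmin := by positivity
        rw [indicator_of_mem hmem, indicator_of_mem hmem, NNReal.smul_def,
          Real.coe_toNNReal _ (by
            exact mul_nonneg (div_nonneg (by linarith) hx.le) (Real.rpow_nonneg hu.le _))]
        have he : Real.exp (-(s * Real.log (x / xmin))) = (x / xmin) ^ (-s) := by
          rw [Real.rpow_def_of_pos hu]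
          ring_nf
        rw [he, smul_eq_mul, mul_assoc, ← Real.rpow_add hu]
        rw [show -α + -s = -α - s by ring, Real.div_rpow hx0.le hx.le]
        field_simp
      · rw [indicator_of_notMem hmem, indicator_of_notMem hmem]
        simp
    rw [step2, integral_indicator measurableSet_Ici, integral_Ici_eq_integral_Ioi,
      integral_const_mul, integral_Ioi_rpow_of_lt hq hx]
    have hxq : (0:ℝ) < xmin ^ (-α - s) := Real.rpow_pos_of_pos hx _
    have hxq1 : xmin ^ (-α - s + 1) = xmin ^ (-α - s) * xmin :=
      Real.rpow_add_one hx.ne' _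
    rw [hxq1]
    have hd : α - 1 + s ≠ 0 := by linarith
    have hd2 : -α - s + 1 ≠ 0 := by intro h; apply hd; linarith
    field_simp
    ring
  -- combined Laplace transform of T
  have hexp : ∀ s : ℝ, 0 ≤ s →
      ∫ ω, Real.exp (-(s * ∑ i, Real.log (X i ω / xmin))) ∂Pr
        = ((α - 1) / (α - 1 + s)) ^ n := by
    intro s hs
    have hYm : ∀ i : Fin n, Measurable fun ω => Real.log (X i ω / xmin) :=
      fun i => Real.measurable_log.comp ((hX i).div_const xmin)
    have hYindep : iIndepFun
        (fun i ω => Real.log (X i ω / xmin)) Pr :=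
      hindep.comp (fun _ x => Real.log (x / xmin))
        (fun i => Real.measurable_log.comp (measurable_id.div_const xmin))
    have hmg := hYindep.mgf_sum (t := -s) hYm Finset.univ
    have h1 : mgf (∑ i : Fin n, fun ω => Real.log (X i ω / xmin)) Pr (-s)
        = ∫ ω, Real.exp (-(s * ∑ i, Real.log (X i ω / xmin))) ∂Pr := by
      simp only [mgf, Finset.sum_apply, neg_mul]
    have h2 : ∀ i : Fin n, mgf (fun ω => Real.log (X i ω / xmin)) Pr (-s)
        = (α - 1) / (α - 1 + s) := by
      intro i
      have := hmom i s hs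
      simpa [mgf, neg_mul] using this
    rw [← h1, hmg, Finset.prod_congr rfl fun i _ => h2 i, Finset.prod_const,
      Finset.card_univ, Fintype.card_fin]
  have hv : variance (fun ω => 1 + (n:ℝ) / ∑ i, Real.log (X i ω / xmin)) Pr
      = (n:ℝ) ^ 2 * (α - 1) ^ 2 / (((n:ℝ) - 1) ^ 2 * ((n:ℝ) - 2)) :=
    gamma_variance Pr n hn (fun ω => ∑ i, Real.log (X i ω / xmin)) hTm hTpos (α - 1) hl hexp
  rw [hv]
  have hval : (n:ℝ) ^ 2 * (α - 1) ^ 2 / (((n:ℝ) - 1) ^ 2 * ((n:ℝ) - 2))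
      = ((n:ℝ) * (α - 1) / (((n:ℝ) - 1) * Real.sqrt ((n:ℝ) - 2))) ^ 2 := by
    rw [div_pow, mul_pow, mul_pow, Real.sq_sqrt ha2.le]
  rw [hval, Real.sqrt_sq (by
    refine div_nonneg (mul_nonneg (Nat.cast_nonneg n) (by linarith)) ?_
    exact mul_nonneg ha1.le (Real.sqrt_nonneg _))]
end
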